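/- Let λ̄ ≥ 1 and, for each k ∈ ℤ³ with |k| = λ̄, let A_k ∈ ℝ³ satisfy A_k · k = 0, |A_k| = 1/√2, and A_{−k} = A_k; set B_k := A_k + i (k/|k|) × A_k ∈ ℂ³, and let a_k ∈ ℂ with conj(a_k) = a_{−k}. Then the vector field W(ξ) := Σ_{|k|=λ̄} a_k B_k e^{i k·ξ} satisfies the average identity ⨍_{𝕋³} W ⊗ W dξ = (1/2) Σ_{|k|=λ̄} |a_k|² (Id − (k/|k|) ⊗ (k/|k|)), where Id denotes the 3×3 identity matrix. -/

import Mathlib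

open scoped BigOperators
open MeasureTheory

noncomputable section

/-- The cross product of two vectors in `ℝ³`. -/
def cross3 (u v : Fin 3 → ℝ) : Fin 3 → ℝ :=
  ![u 1 * v 2 - u 2 * v 1, u 2 * v 0 - u 0 * v 2, u 0 * v 1 - u 1 * v 0]

/-- A fundamental domain of the `(2π)ℤ³`-periodic lattice. -/
def D3 : Set (Fin 3 → ℝ) := Set.univ.pi fun _ => Set.Icc (0 : ℝ) (2 * Real.pi)

lemma helper_diag (K0 K1 K2 A0 A1 A2 : ℝ) (e1 : K0^2+K1^2+K2^2 = 1)
    (e2 : A0^2+A1^2+A2^2 = 1/2) (e3 : A0*K0+A1*K1+A2*K2 = 0) :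
    A0*A0 + (K1*A2 - K2*A1)*(K1*A2 - K2*A1) = 1/2*(1 - K0*K0) := by
  linear_combination (A0^2+A1^2+A2^2 - A0*A0) * e1 + (1 - K0*K0) * e2
    + (K0*A0 - A1*K1 - A2*K2) * e3

lemma helper_off (K0 K1 K2 A0 A1 A2 : ℝ) (e1 : K0^2+K1^2+K2^2 = 1)
    (e2 : A0^2+A1^2+A2^2 = 1/2) (e3 : A0*K0+A1*K1+A2*K2 = 0) :
    A0*A1 + (K1*A2 - K2*A1)*(K2*A0 - K0*A2) = 1/2*(0 - K0*K1) := by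
  linear_combination (- A0*A1) * e1 + (- K0*K1) * e2 + (K0*A1 + A0*K1) * e3

lemma oneD (m : ℤ) :
    (∫ x in Set.Icc (0:ℝ) (2*Real.pi), Complex.exp (Complex.I * m * x))
      = if m = 0 then ((2*Real.pi : ℝ) : ℂ) else 0 := by
  rw [MeasureTheory.integral_Icc_eq_integral_Ioc,
    ← intervalIntegral.integral_of_le (by positivity : (0:ℝ) ≤ 2*Real.pi)]
  by_cases hm : m = 0
  · simp [hm]
  · have hc : Complex.I * m ≠ 0 :=
      mul_ne_zero Complex.I_ne_zero (by exact_mod_cast hm)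
    rw [if_neg hm]
    have h2 : (Complex.I * m) * ((2*Real.pi : ℝ) : ℂ) = m * (2*Real.pi*Complex.I) := by
      push_cast; ring
    have := integral_exp_mul_complex (a := 0) (b := 2*Real.pi) hc
    simp only [mul_assoc] at this ⊢
    rw [this]
    rw [← mul_assoc, h2, Complex.exp_int_mul_two_pi_mul_I]
    simp

lemma intD3 (m : Fin 3 → ℤ) :
    (∫ ξ in D3, Complex.exp (Complex.I * ((∑ j, (m j : ℝ) * ξ j : ℝ) : ℂ)))
      = if m = 0 then (((2*Real.pi)^3 : ℝ) : ℂ) else 0 := by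
  have hmeas : MeasurableSet D3 := MeasurableSet.univ_pi fun _ => measurableSet_Icc
  rw [← MeasureTheory.integral_indicator hmeas]
  have key : (Set.indicator D3 fun ξ => Complex.exp (Complex.I * ((∑ j, (m j : ℝ) * ξ j : ℝ) : ℂ)))
      = fun ξ => ∏ j, Set.indicator (Set.Icc (0:ℝ) (2*Real.pi))
          (fun x => Complex.exp (Complex.I * m j * x)) (ξ j) := by
    funext ξ
    have hexp : Complex.exp (Complex.I * ((∑ j, (m j : ℝ) * ξ j : ℝ) : ℂ))
        = ∏ j, Complex.exp (Complex.I * m j * ξ j) := by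
      rw [← Complex.exp_sum]
      congr 1
      push_cast
      rw [Finset.mul_sum]
      exact Finset.sum_congr rfl fun j _ => by ring
    by_cases hξ : ξ ∈ D3
    · rw [Set.indicator_of_mem hξ, hexp]
      refine Finset.prod_congr rfl fun j _ => ?_
      rw [Set.indicator_of_mem (show ξ j ∈ Set.Icc (0:ℝ) (2*Real.pi) from hξ j (Set.mem_univ j))]
    · rw [Set.indicator_of_notMem hξ]
      obtain ⟨j, hj⟩ : ∃ j, ξ j ∉ Set.Icc (0:ℝ) (2*Real.pi) := by
        by_contra h
        push_neg at h
        exact hξ fun j _ => h j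
      exact (Finset.prod_eq_zero (Finset.mem_univ j) (Set.indicator_of_notMem hj _)).symm
  rw [key, MeasureTheory.volume_pi]
  beta_reduce
  rw [MeasureTheory.integral_fintype_prod_eq_prod (ι := Fin 3)
    (fun j x => Set.indicator (Set.Icc (0:ℝ) (2*Real.pi))
      (fun x => Complex.exp (Complex.I * m j * x)) x)]
  simp only [MeasureTheory.integral_indicator measurableSet_Icc, oneD]
  by_cases hm : m = 0
  · simp [hm]
  · obtain ⟨j, hj⟩ := Function.ne_iff.mp hm
    have hj' : m j ≠ 0 := by simpa using hj
    rw [if_neg hm]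
    exact Finset.prod_eq_zero (Finset.mem_univ j) (by simp [hj'])

theorem beltrami_average
    (lam : ℝ) (hlam : 1 ≤ lam)
    (S : Finset (Fin 3 → ℤ))
    (hSnorm : ∀ k ∈ S, Real.sqrt (∑ i, ((k i : ℝ)) ^ 2) = lam)
    (hSneg : ∀ k ∈ S, -k ∈ S)
    (A : (Fin 3 → ℤ) → (Fin 3 → ℝ))
    (hAperp : ∀ k ∈ S, ∑ i, A k i * (k i : ℝ) = 0)
    (hAnorm : ∀ k ∈ S, Real.sqrt (∑ i, (A k i) ^ 2) = 1 / Real.sqrt 2)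
    (hAneg : ∀ k ∈ S, A (-k) = A k)
    (a : (Fin 3 → ℤ) → ℂ)
    (ha : ∀ k ∈ S, (starRingEnd ℂ) (a k) = a (-k))
    (B : (Fin 3 → ℤ) → (Fin 3 → ℂ))
    (hB : ∀ k i, B k i = (A k i : ℂ)
      + Complex.I * ((cross3 (fun j => (k j : ℝ) / lam) (A k) i : ℝ) : ℂ))
    (W : (Fin 3 → ℝ) → (Fin 3 → ℂ))
    (hW : ∀ ξ i, W ξ i
      = ∑ k ∈ S, a k * B k i * Complex.exp (Complex.I * ((∑ j, (k j : ℝ) * ξ j : ℝ) : ℂ)))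
    -- the real-valued vector field determined by `W`
    (Wr : (Fin 3 → ℝ) → (Fin 3 → ℝ))
    (hWr : ∀ ξ i, Wr ξ i = (W ξ i).re) :
    ∀ i j : Fin 3,
      (2 * Real.pi) ^ 3 * ((1 : ℝ) / 2 * ∑ k ∈ S, (‖a k‖) ^ 2 *
          ((if i = j then (1 : ℝ) else 0) - ((k i : ℝ) / lam) * ((k j : ℝ) / lam)))
        = ∫ ξ in D3, Wr ξ i * Wr ξ j := by
  intro i j
  have hlam0 : (0:ℝ) < lam := lt_of_lt_of_le one_pos hlam
  have hlamne : lam ≠ 0 := ne_of_gt hlam0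
  -- normalization facts
  have hknorm : ∀ k ∈ S, ((k 0:ℝ))^2 + ((k 1:ℝ))^2 + ((k 2:ℝ))^2 = lam^2 := by
    intro k hk
    have h := hSnorm k hk
    have hnn : (0:ℝ) ≤ ∑ t, ((k t:ℝ))^2 := Finset.sum_nonneg fun t _ => sq_nonneg _
    have h2 := Real.sq_sqrt hnn
    rw [h] at h2
    rw [← Fin.sum_univ_three (fun t => ((k t:ℝ))^2), ← h2]
  have hKnorm : ∀ k ∈ S, ((k 0:ℝ)/lam)^2 + ((k 1:ℝ)/lam)^2 + ((k 2:ℝ)/lam)^2 = 1 := by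
    intro k hk
    have h := hknorm k hk
    field_simp
    linarith
  have hA2 : ∀ k ∈ S, (A k 0)^2 + (A k 1)^2 + (A k 2)^2 = 1/2 := by
    intro k hk
    have h := hAnorm k hk
    have hnn : (0:ℝ) ≤ ∑ t, (A k t)^2 := Finset.sum_nonneg fun t _ => sq_nonneg _
    have h2 := Real.sq_sqrt hnn
    rw [h] at h2
    have h3 : ((1:ℝ)/Real.sqrt 2)^2 = 1/2 := by
      rw [div_pow, one_pow, Real.sq_sqrt (by norm_num : (0:ℝ) ≤ 2)]
    rw [← Fin.sum_univ_three (fun t => (A k t)^2), ← h2, h3]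
  have hAK : ∀ k ∈ S, A k 0 * ((k 0:ℝ)/lam) + A k 1 * ((k 1:ℝ)/lam) + A k 2 * ((k 2:ℝ)/lam) = 0 := by
    intro k hk
    have h := hAperp k hk
    rw [Fin.sum_univ_three] at h
    field_simp
    linarith
  -- conjugation symmetry of B
  have hBconj : ∀ k ∈ S, ∀ t, (starRingEnd ℂ) (B k t) = B (-k) t := by
    intro k hk t
    have hc : cross3 (fun u => (((-k) u : ℤ) : ℝ)/lam) (A k) t
        = - cross3 (fun u => ((k u : ℝ))/lam) (A k) t := by
      fin_cases t <;> simp [cross3] <;> push_cast <;> ring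
    rw [hB k t, hB (-k) t, hAneg k hk, hc]
    simp only [map_add, map_mul, Complex.conj_I, Complex.conj_ofReal, Complex.ofReal_neg]
    ring
  -- W is real valued
  have hWreal : ∀ ξ t, (starRingEnd ℂ) (W ξ t) = W ξ t := by
    intro ξ t
    rw [hW, map_sum]
    refine Finset.sum_equiv (Equiv.neg (Fin 3 → ℤ)) (fun k => ?_) (fun k hk => ?_)
    · exact ⟨fun h => hSneg k h, fun h => by simpa using hSneg (-k) h⟩
    · simp only [Equiv.neg_apply]
      rw [map_mul, map_mul, ha k hk, hBconj k hk t, ← Complex.exp_conj]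
      have hc : (∑ u, (((-k) u : ℤ):ℝ) * ξ u) = - ∑ u, ((k u:ℝ)) * ξ u := by
        rw [← Finset.sum_neg_distrib]
        refine Finset.sum_congr rfl fun u _ => ?_
        push_cast [Pi.neg_apply]
        ring
      congr 2
      rw [map_mul, Complex.conj_I, Complex.conj_ofReal, hc]
      push_cast
      ring
  have hWcast : ∀ ξ t, ((W ξ t).re : ℂ) = W ξ t := fun ξ t =>
    Complex.conj_eq_iff_re.mp (hWreal ξ t)
  have hprod : ∀ ξ, ((Wr ξ i * Wr ξ j : ℝ) : ℂ) = W ξ i * W ξ j := by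
    intro ξ
    rw [hWr, hWr]
    push_cast
    rw [hWcast, hWcast]
  -- integrability
  have hcompact : IsCompact D3 := isCompact_univ_pi fun _ => isCompact_Icc
  have hinteg : ∀ (c : ℂ) (n : Fin 3 → ℤ),
      IntegrableOn (fun ξ : Fin 3 → ℝ =>
        c * Complex.exp (Complex.I * ((∑ u, (n u:ℝ) * ξ u : ℝ):ℂ))) D3 := by
    intro c n
    refine (Continuous.continuousOn ?_).integrableOn_compact hcompact
    refine continuous_const.mul (Complex.continuous_exp.comp ?_)
    refine continuous_const.mul (Complex.continuous_ofReal.comp ?_)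
    exact continuous_finset_sum _ fun u _ => continuous_const.mul (continuous_apply u)
  -- expansion of the product
  have hWW : ∀ ξ, W ξ i * W ξ j = ∑ k ∈ S, ∑ l ∈ S,
      (a k * B k i * (a l * B l j)) *
        Complex.exp (Complex.I * ((∑ u, (((k + l) u : ℤ):ℝ) * ξ u : ℝ):ℂ)) := by
    intro ξ
    rw [hW, hW, Finset.sum_mul_sum]
    refine Finset.sum_congr rfl fun k _ => Finset.sum_congr rfl fun l _ => ?_
    have hsum : (∑ u, (((k + l) u : ℤ):ℝ) * ξ u)
        = (∑ u, ((k u:ℝ)) * ξ u) + (∑ u, ((l u:ℝ)) * ξ u) := by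
      rw [← Finset.sum_add_distrib]
      refine Finset.sum_congr rfl fun u _ => ?_
      push_cast [Pi.add_apply]
      ring
    rw [hsum]
    push_cast
    rw [mul_add, Complex.exp_add]
    ring
  have hintWW : IntegrableOn (fun ξ => W ξ i * W ξ j) D3 := by
    rw [show (fun ξ => W ξ i * W ξ j) = _ from funext hWW]
    exact MeasureTheory.integrable_finset_sum S fun k _ =>
      MeasureTheory.integrable_finset_sum S fun l _ => hinteg _ _
  have hre : (∫ ξ in D3, Wr ξ i * Wr ξ j) = (∫ ξ in D3, W ξ i * W ξ j).re := by
    have h1 := integral_re hintWW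
    simp only [RCLike.re_to_complex] at h1
    rw [show (fun ξ => Wr ξ i * Wr ξ j) = fun ξ => (W ξ i * W ξ j).re from
      funext fun ξ => by rw [← hprod ξ, Complex.ofReal_re], h1]
  -- the complex integral
  have hV : (∫ ξ in D3, W ξ i * W ξ j) = ∑ k ∈ S,
      (((2*Real.pi)^3 * Complex.normSq (a k) : ℝ) : ℂ) *
        (B k i * (starRingEnd ℂ) (B k j)) := by
    rw [show (fun ξ => W ξ i * W ξ j) = _ from funext hWW]
    rw [MeasureTheory.integral_finset_sum S (fun k _ =>
      MeasureTheory.integrable_finset_sum S (fun l _ => hinteg _ _))]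
    refine Finset.sum_congr rfl fun k hk => ?_
    rw [MeasureTheory.integral_finset_sum S (fun l _ => hinteg _ _)]
    have hinner : ∀ l ∈ S, (∫ ξ in D3, (a k * B k i * (a l * B l j)) *
        Complex.exp (Complex.I * ((∑ u, (((k + l) u : ℤ):ℝ) * ξ u : ℝ):ℂ)))
        = if l = -k then (a k * B k i * (a l * B l j)) * (((2*Real.pi)^3:ℝ):ℂ) else 0 := by
      intro l _
      rw [MeasureTheory.integral_const_mul, intD3 (k + l)]
      by_cases hl : l = -k
      · rw [if_pos (show k + l = 0 by rw [hl]; ring), if_pos hl]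
      · have hne : ¬ (k + l = 0) := fun h => hl (eq_neg_iff_add_eq_zero.mpr (by rw [add_comm]; exact h))
        rw [if_neg hne, if_neg hl, mul_zero]
    rw [Finset.sum_congr rfl hinner, Finset.sum_ite_eq' S (-k)
      (fun l => (a k * B k i * (a l * B l j)) * (((2*Real.pi)^3:ℝ):ℂ)),
      if_pos (hSneg k hk)]
    rw [← ha k hk, ← hBconj k hk j]
    rw [show a k * B k i * ((starRingEnd ℂ) (a k) * (starRingEnd ℂ) (B k j))
        * (((2*Real.pi)^3:ℝ):ℂ)
      = (a k * (starRingEnd ℂ) (a k)) * (B k i * (starRingEnd ℂ) (B k j))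
        * (((2*Real.pi)^3:ℝ):ℂ) from by ring, Complex.mul_conj]
    push_cast
    ring
  -- real part of each coefficient
  have hBre : ∀ k ∈ S, (B k i * (starRingEnd ℂ) (B k j)).re
      = A k i * A k j + cross3 (fun u => ((k u:ℝ))/lam) (A k) i
          * cross3 (fun u => ((k u:ℝ))/lam) (A k) j := by
    intro k _
    rw [hB k i, hB k j]
    rw [map_add, map_mul, Complex.conj_I, Complex.conj_ofReal, Complex.conj_ofReal]
    simp [Complex.mul_re, Complex.add_re, Complex.add_im]
  -- the algebraic identity
  have hid : ∀ k ∈ S, A k i * A k j + cross3 (fun u => ((k u:ℝ))/lam) (A k) i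
      * cross3 (fun u => ((k u:ℝ))/lam) (A k) j
      = 1/2 * ((if i = j then (1:ℝ) else 0) - ((k i:ℝ)/lam) * ((k j:ℝ)/lam)) := by
    intro k hk
    have E1 := hKnorm k hk
    have E2 := hA2 k hk
    have E3 := hAK k hk
    fin_cases i <;> fin_cases j <;> simp [cross3]
    · linear_combination helper_diag ((k 0:ℝ)/lam) ((k 1:ℝ)/lam) ((k 2:ℝ)/lam)
        (A k 0) (A k 1) (A k 2) E1 E2 E3
    · linear_combination helper_off ((k 0:ℝ)/lam) ((k 1:ℝ)/lam) ((k 2:ℝ)/lam)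
        (A k 0) (A k 1) (A k 2) E1 E2 E3
    · linear_combination helper_off ((k 2:ℝ)/lam) ((k 0:ℝ)/lam) ((k 1:ℝ)/lam)
        (A k 2) (A k 0) (A k 1) (by linarith) (by linarith) (by linarith)
    · linear_combination helper_off ((k 0:ℝ)/lam) ((k 1:ℝ)/lam) ((k 2:ℝ)/lam)
        (A k 0) (A k 1) (A k 2) E1 E2 E3
    · linear_combination helper_diag ((k 1:ℝ)/lam) ((k 2:ℝ)/lam) ((k 0:ℝ)/lam)
        (A k 1) (A k 2) (A k 0) (by linarith) (by linarith) (by linarith)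
    · linear_combination helper_off ((k 1:ℝ)/lam) ((k 2:ℝ)/lam) ((k 0:ℝ)/lam)
        (A k 1) (A k 2) (A k 0) (by linarith) (by linarith) (by linarith)
    · linear_combination helper_off ((k 2:ℝ)/lam) ((k 0:ℝ)/lam) ((k 1:ℝ)/lam)
        (A k 2) (A k 0) (A k 1) (by linarith) (by linarith) (by linarith)
    · linear_combination helper_off ((k 1:ℝ)/lam) ((k 2:ℝ)/lam) ((k 0:ℝ)/lam)
        (A k 1) (A k 2) (A k 0) (by linarith) (by linarith) (by linarith)
    · linear_combination helper_diag ((k 2:ℝ)/lam) ((k 0:ℝ)/lam) ((k 1:ℝ)/lam)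
        (A k 2) (A k 0) (A k 1) (by linarith) (by linarith) (by linarith)
  -- assemble
  rw [hre, hV, Complex.re_sum]
  simp only [Complex.re_ofReal_mul]
  rw [Finset.mul_sum, Finset.mul_sum]
  refine Finset.sum_congr rfl fun k hk => ?_
  rw [hBre k hk, hid k hk, Complex.sq_norm]
  ring
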